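/- For a 5-body planar central configuration normalized with λ = M whose convex hull is a triangle q_1 q_2 q_3, at least two of the three inequalities Š_{12} < 0, Š_{23} < 0, Š_{13} < 0 hold, where Š_{ij} = r_{ij}^{−3} − 1. Equivalently, at least two of the three exterior sides have length greater than 1. -/

import Mathlib

open Finset

/-- The shifted quantity `Šᵢⱼ = rᵢⱼ⁻³ − 1`. -/
noncomputable def Scheck (q : Fin 5 → EuclideanSpace ℝ (Fin 2)) (i j : Fin 5) : ℝ :=
  1 / dist (q i) (q j) ^ 3 - 1

lemma Scheck_comm (q : Fin 5 → EuclideanSpace ℝ (Fin 2)) (i j : Fin 5) :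
    Scheck q i j = Scheck q j i := by simp [Scheck, dist_comm]

/-- The key identity: `∑_{j≠i} (mⱼ Šᵢⱼ) (qⱼ - qᵢ) = 0`. -/
lemma key_identity (q : Fin 5 → EuclideanSpace ℝ (Fin 2)) (m : Fin 5 → ℝ)
    (hcom : ∑ i, m i • q i = 0)
    (hcc : ∀ i, -((∑ j, m j) • q i)
      = ∑ j ∈ Finset.univ.erase i, (m j / dist (q i) (q j) ^ 3) • (q j - q i))
    (i : Fin 5) :
    ∑ j ∈ Finset.univ.erase i, (m j * Scheck q i j) • (q j - q i) = 0 := by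
  have h1 : ∑ j ∈ Finset.univ.erase i, m j • (q j - q i)
      = -((∑ j, m j) • q i) := by
    have huniv' : ∑ j, m j • (q j - q i) = -((∑ j, m j) • q i) := by
      have h0 : ∀ j, m j • (q j - q i) = m j • q j - m j • q i := fun j => smul_sub _ _ _
      simp_rw [h0, Finset.sum_sub_distrib, hcom, ← Finset.sum_smul, zero_sub]
    rw [Finset.sum_erase_eq_sub (Finset.mem_univ i), huniv']
    simp
  have h2 : ∀ j ∈ Finset.univ.erase i, (m j * Scheck q i j) • (q j - q i)
      = (m j / dist (q i) (q j) ^ 3) • (q j - q i) - m j • (q j - q i) := by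
    intro j _
    rw [show m j * Scheck q i j = m j / dist (q i) (q j) ^ 3 - m j by
      unfold Scheck; ring, sub_smul]
  rw [Finset.sum_congr rfl h2, Finset.sum_sub_distrib, ← hcc i, h1, sub_self]

/-- Contradiction at a vertex `a` of the triangle whose two incident sides are short. -/
lemma atVertex (q : Fin 5 → EuclideanSpace ℝ (Fin 2)) (m : Fin 5 → ℝ)
    (hm : ∀ i, 0 < m i) (hq : ∀ i j, i ≠ j → q i ≠ q j)
    (hcom : ∑ i, m i • q i = 0)
    (hcc : ∀ i, -((∑ j, m j) • q i)
      = ∑ j ∈ Finset.univ.erase i, (m j / dist (q i) (q j) ^ 3) • (q j - q i))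
    (a b c : Fin 5)
    (huniv : Finset.univ.erase a = {b, c, 3, 4})
    (hbc : b ≠ c) (hb3 : b ≠ (3:Fin 5)) (hb4 : b ≠ (4:Fin 5))
    (hc3 : c ≠ (3:Fin 5)) (hc4 : c ≠ (4:Fin 5))
    (ha3 : a ≠ (3:Fin 5)) (ha4 : a ≠ (4:Fin 5)) (hab : a ≠ b) (hac : a ≠ c)
    (hint3 : q 3 ∈ interior (convexHull ℝ {q a, q b, q c}))
    (hint4 : q 4 ∈ interior (convexHull ℝ {q a, q b, q c}))
    (hSb : 0 ≤ Scheck q a b) (hSc : 0 ≤ Scheck q a c) : False := by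
  -- sides from `a` have length ≤ 1
  have hshort : ∀ j : Fin 5, a ≠ j → 0 ≤ Scheck q a j → dist (q a) (q j) ≤ 1 := by
    intro j haj hS
    have hd : 0 < dist (q a) (q j) := dist_pos.mpr (hq a j haj)
    have hd3 : 0 < dist (q a) (q j) ^ 3 := pow_pos hd 3
    have h1 : (1:ℝ) ≤ 1 / dist (q a) (q j) ^ 3 := by
      unfold Scheck at hS; linarith
    have h2 : dist (q a) (q j) ^ 3 ≤ 1 := by
      rw [le_div_iff₀ hd3, one_mul] at h1; exact h1
    by_contra hgt
    push_neg at hgt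
    have := one_lt_pow₀ hgt (by norm_num : 3 ≠ 0)
    linarith
  have hdb : dist (q a) (q b) ≤ 1 := hshort b hab hSb
  have hdc : dist (q a) (q c) ≤ 1 := hshort c hac hSc
  -- the triangle lies in the closed unit ball around `q a`
  have hsub : convexHull ℝ {q a, q b, q c} ⊆ Metric.closedBall (q a) 1 := by
    apply convexHull_min _ (convex_closedBall _ _)
    intro x hx
    rcases hx with rfl | rfl | rfl
    · simp
    · simpa [Metric.mem_closedBall, dist_comm] using hdb
    · simpa [Metric.mem_closedBall, dist_comm] using hdc
  -- hence the interior points are strictly within distance 1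
  have hin : ∀ j : Fin 5, a ≠ j →
      q j ∈ interior (convexHull ℝ {q a, q b, q c}) → 0 < Scheck q a j := by
    intro j haj hj
    have h1 : q j ∈ Metric.ball (q a) 1 := by
      have := interior_mono hsub hj
      rwa [interior_closedBall _ one_ne_zero] at this
    have hd1 : dist (q a) (q j) < 1 := by rw [dist_comm]; exact Metric.mem_ball.mp h1
    have hd : 0 < dist (q a) (q j) := dist_pos.mpr (hq a j haj)
    have hd3 : 0 < dist (q a) (q j) ^ 3 := pow_pos hd 3
    have h3 : dist (q a) (q j) ^ 3 < 1 := pow_lt_one₀ dist_nonneg hd1 (by norm_num)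
    have : (1:ℝ) < 1 / dist (q a) (q j) ^ 3 := by
      rw [lt_div_iff₀ hd3, one_mul]; exact h3
    unfold Scheck; linarith
  have hS3 : 0 < Scheck q a 3 := hin 3 ha3 hint3
  have hS4 : 0 < Scheck q a 4 := hin 4 ha4 hint4
  -- `q a` is not on the segment `[q b, q c]`
  have hnot : q a ∉ convexHull ℝ ({q b, q c} : Set (EuclideanSpace ℝ (Fin 2))) := by
    intro hmem
    have hsub2 : convexHull ℝ ({q a, q b, q c} : Set (EuclideanSpace ℝ (Fin 2)))
        ⊆ convexHull ℝ ({q b, q c} : Set (EuclideanSpace ℝ (Fin 2))) := by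
      apply convexHull_min _ (convex_convexHull _ _)
      intro x hx
      rcases hx with rfl | rfl | rfl
      · exact hmem
      · exact subset_convexHull _ _ (by simp)
      · exact subset_convexHull _ _ (by simp)
    have hne : (interior (convexHull ℝ ({q b, q c} : Set (EuclideanSpace ℝ (Fin 2))))).Nonempty :=
      ⟨q 3, interior_mono hsub2 hint3⟩
    have htop : affineSpan ℝ ({q b, q c} : Set (EuclideanSpace ℝ (Fin 2))) = ⊤ := by
      have := (convex_convexHull ℝ ({q b, q c} : Set (EuclideanSpace ℝ (Fin 2)))).interior_nonempty_iff_affineSpan_eq_top.mp hne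
      rwa [affineSpan_convexHull] at this
    have hvtop : vectorSpan ℝ ({q b, q c} : Set (EuclideanSpace ℝ (Fin 2))) = ⊤ := by
      rw [← direction_affineSpan, htop, AffineSubspace.direction_top]
    have hv : q b - q c ≠ 0 := sub_ne_zero.mpr (hq b c hbc)
    have h1 : Module.finrank ℝ (vectorSpan ℝ ({q b, q c} : Set (EuclideanSpace ℝ (Fin 2)))) = 1 := by
      rw [vectorSpan_pair]
      exact finrank_span_singleton (by simpa using hv)
    rw [hvtop, finrank_top] at h1
    simp [finrank_euclideanSpace] at h1
  -- separate `q a` from the segment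
  obtain ⟨f, u, hfu, huf⟩ := geometric_hahn_banach_closed_point
    (convex_convexHull ℝ _) ((Set.toFinite ({q b, q c} : Set (EuclideanSpace ℝ (Fin 2)))).isClosed_convexHull (𝕜 := ℝ)) hnot
  have hfb : f (q b) < f (q a) :=
    lt_trans (hfu _ (subset_convexHull _ _ (by simp))) huf
  have hfc : f (q c) < f (q a) :=
    lt_trans (hfu _ (subset_convexHull _ _ (by simp))) huf
  -- the triangle lies in the halfspace `f ≤ f (q a)`
  have hhalf : convexHull ℝ ({q a, q b, q c} : Set (EuclideanSpace ℝ (Fin 2)))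
      ⊆ {x | f x ≤ f (q a)} := by
    apply convexHull_min _ (convex_halfSpace_le (f : EuclideanSpace ℝ (Fin 2) →ₗ[ℝ] ℝ).isLinear _)
    intro x hx
    simp only [Set.mem_setOf_eq]
    rcases hx with rfl | rfl | rfl
    · exact le_rfl
    · exact le_of_lt hfb
    · exact le_of_lt hfc
  -- strict inequality at interior points
  have hstrict : ∀ j : Fin 5,
      q j ∈ interior (convexHull ℝ {q a, q b, q c}) → f (q j) < f (q a) := by
    intro j hj
    set v := q a - q b with hvdef
    have hfv : 0 < f v := by rw [hvdef, map_sub]; linarith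
    have hvne : v ≠ 0 := fun h => by rw [h, map_zero] at hfv; exact lt_irrefl _ hfv
    obtain ⟨ε, hε, hball⟩ := Metric.isOpen_iff.mp isOpen_interior _ hj
    set t : ℝ := ε / (2 * ‖v‖) with htdef
    have hnv : 0 < ‖v‖ := norm_pos_iff.mpr hvne
    have ht : 0 < t := div_pos hε (by linarith)
    have hpmem : q j + t • v ∈ convexHull ℝ ({q a, q b, q c} : Set (EuclideanSpace ℝ (Fin 2))) := by
      apply interior_subset
      apply hball
      rw [Metric.mem_ball, dist_eq_norm]
      have : q j + t • v - q j = t • v := by abel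
      rw [this, norm_smul, Real.norm_eq_abs, abs_of_pos ht, htdef]
      rw [div_mul_eq_mul_div, mul_comm]
      rw [div_lt_iff₀ (by linarith : (0:ℝ) < 2 * ‖v‖)]
      nlinarith
    have := hhalf hpmem
    simp only [Set.mem_setOf_eq, map_add, map_smul, smul_eq_mul] at this
    nlinarith
  have hf3 : f (q 3) < f (q a) := hstrict 3 hint3
  have hf4 : f (q 4) < f (q a) := hstrict 4 hint4
  -- apply `f` to the key identity
  have hk := key_identity q m hcom hcc a
  have hf0 : ∑ j ∈ Finset.univ.erase a, (m j * Scheck q a j) * (f (q j) - f (q a)) = 0 := by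
    have := congrArg f hk
    simpa [map_sum, map_smul, map_sub, smul_eq_mul] using this
  rw [huniv, show ({b, c, 3, 4} : Finset (Fin 5))
        = insert b (insert c ({3, 4} : Finset (Fin 5))) from rfl,
    Finset.sum_insert (by simp [hbc, hb3, hb4]),
    Finset.sum_insert (by simp [hc3, hc4]),
    Finset.sum_pair (by decide : (3:Fin 5) ≠ 4)] at hf0
  have tb : (m b * Scheck q a b) * (f (q b) - f (q a)) ≤ 0 :=
    mul_nonpos_of_nonneg_of_nonpos (mul_nonneg (hm b).le hSb) (by linarith)
  have tc : (m c * Scheck q a c) * (f (q c) - f (q a)) ≤ 0 :=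
    mul_nonpos_of_nonneg_of_nonpos (mul_nonneg (hm c).le hSc) (by linarith)
  have t3 : (m 3 * Scheck q a 3) * (f (q 3) - f (q a)) < 0 :=
    mul_neg_of_pos_of_neg (mul_pos (hm 3) hS3) (by linarith)
  have t4 : (m 4 * Scheck q a 4) * (f (q 4) - f (q a)) < 0 :=
    mul_neg_of_pos_of_neg (mul_pos (hm 4) hS4) (by linarith)
  linarith

/-- For a normalized (`λ = M`) 5-body planar central configuration whose convex
hull is the triangle `q 0 q 1 q 2` (with `q 3`, `q 4` interior), at least two of the
three exterior sides are "long": at least two of `Š₀₁ < 0`, `Š₁₂ < 0`, `Š₀₂ < 0`. -/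
theorem stmt15 (q : Fin 5 → EuclideanSpace ℝ (Fin 2)) (m : Fin 5 → ℝ)
    (hm : ∀ i, 0 < m i) (hq : ∀ i j, i ≠ j → q i ≠ q j)
    (hcom : ∑ i, m i • q i = 0)
    (hcc : ∀ i, -((∑ j, m j) • q i)
      = ∑ j ∈ Finset.univ.erase i, (m j / dist (q i) (q j) ^ 3) • (q j - q i))
    (h4 : q 3 ∈ interior (convexHull ℝ {q 0, q 1, q 2}))
    (h5 : q 4 ∈ interior (convexHull ℝ {q 0, q 1, q 2})) :
    (Scheck q 0 1 < 0 ∧ Scheck q 1 2 < 0) ∨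
    (Scheck q 0 1 < 0 ∧ Scheck q 0 2 < 0) ∨
    (Scheck q 1 2 < 0 ∧ Scheck q 0 2 < 0) := by
  rcases lt_or_ge (Scheck q 0 1) 0 with hA | hA
  · rcases lt_or_ge (Scheck q 1 2) 0 with hB | hB
    · exact Or.inl ⟨hA, hB⟩
    · rcases lt_or_ge (Scheck q 0 2) 0 with hC | hC
      · exact Or.inr (Or.inl ⟨hA, hC⟩)
      · -- vertex 2: sides 12 and 02 short
        exfalso
        have hset : ({q 2, q 1, q 0} : Set (EuclideanSpace ℝ (Fin 2))) = {q 0, q 1, q 2} := by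
          ext x; simp only [Set.mem_insert_iff, Set.mem_singleton_iff]; tauto
        exact atVertex q m hm hq hcom hcc 2 1 0 (by decide) (by decide) (by decide)
          (by decide) (by decide) (by decide) (by decide) (by decide) (by decide) (by decide)
          (by rw [hset]; exact h4) (by rw [hset]; exact h5)
          (by rw [Scheck_comm]; exact hB) (by rw [Scheck_comm]; exact hC)
  · rcases lt_or_ge (Scheck q 1 2) 0 with hB | hB
    · rcases lt_or_ge (Scheck q 0 2) 0 with hC | hC
      · exact Or.inr (Or.inr ⟨hB, hC⟩)
      · -- vertex 0: sides 01 and 02 short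
        exfalso
        exact atVertex q m hm hq hcom hcc 0 1 2 (by decide) (by decide) (by decide)
          (by decide) (by decide) (by decide) (by decide) (by decide) (by decide) (by decide)
          h4 h5 hA hC
    · -- vertex 1: sides 01 and 12 short
      exfalso
      have hset : ({q 1, q 0, q 2} : Set (EuclideanSpace ℝ (Fin 2))) = {q 0, q 1, q 2} :=
        Set.insert_comm _ _ _
      exact atVertex q m hm hq hcom hcc 1 0 2 (by decide) (by decide) (by decide)
        (by decide) (by decide) (by decide) (by decide) (by decide) (by decide) (by decide)
        (by rw [hset]; exact h4) (by rw [hset]; exact h5)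
        (by rw [Scheck_comm]; exact hA) hB
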